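/- Let r, s ∈ (0, 1) be real numbers, and consider the vectors u = (s − r, 1) and v = (1, 0) in the Euclidean plane ℝ². Then the absolute value of the cosine of the angle between u and v equals |s − r|/√(1 + (s − r)²) and is strictly less than 1/√2; consequently the angle between u and v lies strictly between π/4 and 3π/4 (i.e. strictly between 45° and 135°). -/

import Mathlib

open RealInnerProductSpace

/-- The vector `(a, b)` in the Euclidean plane `ℝ²`. -/
noncomputable def vec2 (a b : ℝ) : EuclideanSpace ℝ (Fin 2) :=
  (WithLp.equiv 2 (Fin 2 → ℝ)).symm ![a, b]

/-- For `r, s ∈ (0, 1)`, the absolute value of the cosine of the angle between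
`u = (s − r, 1)` and `v = (1, 0)` equals `|s − r|/√(1 + (s − r)²)` and is strictly
less than `1/√2`; consequently the angle between `u` and `v` lies strictly between
`π/4` and `3π/4`. -/
theorem stmt9 (r s : ℝ) (hr : r ∈ Set.Ioo (0 : ℝ) 1) (hs : s ∈ Set.Ioo (0 : ℝ) 1)
    (u v : EuclideanSpace ℝ (Fin 2))
    (hu : u = vec2 (s - r) 1) (hv : v = vec2 1 0) :
    |⟪u, v⟫ / (‖u‖ * ‖v‖)| = |s - r| / Real.sqrt (1 + (s - r) ^ 2) ∧
    |s - r| / Real.sqrt (1 + (s - r) ^ 2) < 1 / Real.sqrt 2 ∧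
    Real.pi / 4 < InnerProductGeometry.angle u v ∧
    InnerProductGeometry.angle u v < 3 * Real.pi / 4 := by
  set t := s - r with ht
  have htabs : |t| < 1 := by
    rw [abs_lt]
    constructor
    · nlinarith [hr.2, hs.1]
    · nlinarith [hr.1, hs.2]
  have hinner : ⟪u, v⟫ = t := by
    subst hu hv
    simp [vec2, PiLp.inner_apply, Fin.sum_univ_two]
  have hnu : ‖u‖ = Real.sqrt (1 + t ^ 2) := by
    subst hu
    rw [EuclideanSpace.norm_eq]
    congr 1
    simp [vec2, Fin.sum_univ_two]
    ring
  have hnv : ‖v‖ = 1 := by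
    subst hv
    rw [EuclideanSpace.norm_eq]
    simp [vec2, Fin.sum_univ_two]
  have hpos : 0 < Real.sqrt (1 + t ^ 2) := Real.sqrt_pos.2 (by positivity)
  have heq : |⟪u, v⟫ / (‖u‖ * ‖v‖)| = |t| / Real.sqrt (1 + t ^ 2) := by
    rw [hinner, hnu, hnv, mul_one, abs_div, abs_of_pos hpos]
  have s2 : Real.sqrt 2 * Real.sqrt 2 = 2 := Real.mul_self_sqrt (by norm_num)
  have s2pos : 0 < Real.sqrt 2 := Real.sqrt_pos.2 (by norm_num)
  have hlt : |t| / Real.sqrt (1 + t ^ 2) < 1 / Real.sqrt 2 := by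
    rw [div_lt_div_iff₀ hpos s2pos]
    have h2 : Real.sqrt 2 * |t| = Real.sqrt (2 * t ^ 2) := by
      rw [Real.sqrt_mul (by norm_num), Real.sqrt_sq_eq_abs]
    calc |t| * Real.sqrt 2 = Real.sqrt (2 * t ^ 2) := by rw [← h2]; ring
      _ < Real.sqrt (1 + t ^ 2) := by
          apply Real.sqrt_lt_sqrt (by positivity)
          nlinarith [sq_abs t, abs_nonneg t, mul_self_nonneg (1 - |t|), htabs]
      _ = 1 * Real.sqrt (1 + t ^ 2) := by ring
  -- the cosine value
  set c := ⟪u, v⟫ / (‖u‖ * ‖v‖) with hc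
  have h12 : (1 : ℝ) / Real.sqrt 2 = Real.sqrt 2 / 2 := by
    field_simp
    rw [Real.sq_sqrt (by norm_num : (0:ℝ) ≤ 2)]
  have hcabs : |c| < Real.sqrt 2 / 2 := by rw [← h12, heq]; exact hlt
  have habs := abs_lt.1 hcabs
  have hhalf_le_one : Real.sqrt 2 / 2 ≤ 1 := by nlinarith [s2pos.le]
  have hc_mem : c ∈ Set.Icc (-1 : ℝ) 1 := ⟨by linarith [habs.1], by linarith [habs.2]⟩
  have harccos_quarter : Real.arccos (Real.sqrt 2 / 2) = Real.pi / 4 := by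
    rw [← Real.cos_pi_div_four]
    exact Real.arccos_cos (by positivity) (by linarith [Real.pi_pos])
  have hangle : InnerProductGeometry.angle u v = Real.arccos c := rfl
  refine ⟨heq, hlt, ?_, ?_⟩
  · rw [hangle, ← harccos_quarter]
    exact Real.strictAntiOn_arccos hc_mem ⟨by linarith, hhalf_le_one⟩ habs.2
  · rw [hangle]
    have h34 : Real.arccos (-(Real.sqrt 2 / 2)) = 3 * Real.pi / 4 := by
      rw [Real.arccos_neg, harccos_quarter]; ring
    rw [← h34]
    exact Real.strictAntiOn_arccos ⟨by linarith, by linarith⟩ hc_mem habs.1
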